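/- A zero-free degree sequence d = (d_1, ..., d_n) of length n is potentially connected (has a connected realization) if and only if Σ_{i=1}^{n} d_i ≥ 2(n-1). -/

import Mathlib

open SimpleGraph Function

section Aux
variable {V : Type*}

lemma aux_card_succ_le {α β : Type*} [Finite α] (f : α → β) (hf : Surjective f)
    {x y : α} (hxy : x ≠ y) (hfxy : f x = f y) : Nat.card β + 1 ≤ Nat.card α := by
  classical
  haveI : Finite β := Finite.of_surjective f hf
  haveI := Fintype.ofFinite α; haveI := Fintype.ofFinite β
  rw [Nat.card_eq_fintype_card, Nat.card_eq_fintype_card]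
  have hs : Surjective (fun z : {z // z ≠ x} => f z.1) := by
    intro b
    obtain ⟨a, rfl⟩ := hf b
    by_cases h : a = x
    · exact ⟨⟨y, hxy.symm⟩, by rw [h, hfxy]⟩
    · exact ⟨⟨a, h⟩, rfl⟩
  have h1 := Fintype.card_le_of_surjective _ hs
  have h2 : Fintype.card {z // z ≠ x} + 1 = Fintype.card α := by
    have := Fintype.card_subtype_compl (fun z : α => z = x)
    have h3 : Fintype.card {z // z = x} = 1 := Fintype.card_subtype_eq x
    have h4 : 1 ≤ Fintype.card α := Fintype.card_pos_iff.mpr ⟨x⟩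
    simp only [h3] at this
    have h5 : Fintype.card {z // z ≠ x} = Fintype.card {z // ¬ z = x} := by rfl
    omega
  omega

lemma aux_reach_mono {G H : SimpleGraph V} (h : ∀ u v, G.Adj u v → H.Reachable u v)
    {u v : V} (huv : G.Reachable u v) : H.Reachable u v := by
  obtain ⟨p⟩ := huv
  induction p with
  | nil => exact Reachable.refl _
  | cons hadj _ ih => exact (h _ _ hadj).trans ih

/-- map on connected components induced by reachability-monotone relation -/
def compMap {G H : SimpleGraph V} (h : ∀ u v, G.Adj u v → H.Reachable u v) :
    G.ConnectedComponent → H.ConnectedComponent :=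
  ConnectedComponent.lift (fun v => H.connectedComponentMk v)
    (fun _ _ p _ => ConnectedComponent.eq.mpr (aux_reach_mono h ⟨p⟩))

@[simp] lemma compMap_mk {G H : SimpleGraph V} (h : ∀ u v, G.Adj u v → H.Reachable u v) (v : V) :
    compMap h (G.connectedComponentMk v) = H.connectedComponentMk v := rfl

lemma compMap_surjective {G H : SimpleGraph V} (h : ∀ u v, G.Adj u v → H.Reachable u v) :
    Surjective (compMap h) := by
  intro c
  exact c.ind (fun v => ⟨G.connectedComponentMk v, rfl⟩)

lemma aux_comp_card_le [Fintype V] (G : SimpleGraph V) :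
    Nat.card G.ConnectedComponent ≤ Fintype.card V := by
  rw [← Nat.card_eq_fintype_card]
  exact Nat.card_le_card_of_surjective _ (Quot.mk_surjective)

lemma aux_sum_ncard [Fintype V] (G : SimpleGraph V) :
    ∑ v, (G.neighborSet v).ncard = 2 * G.edgeSet.ncard := by
  classical
  have h1 : ∀ v, (G.neighborSet v).ncard = G.degree v := by
    intro v
    rw [← card_neighborSet_eq_degree, ← Nat.card_eq_fintype_card, Nat.card_coe_set_eq]
  simp_rw [h1]
  rw [sum_degrees_eq_twice_card_edges, ← Set.ncard_coe_finset G.edgeFinset, coe_edgeFinset]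

lemma aux_delete_reach {V : Type*} {G : SimpleGraph V} {u v p q : V}
    (h : G.Reachable p q) :
    (G \ fromEdgeSet {s(u,v)}).Reachable p q ∨
      (((G \ fromEdgeSet {s(u,v)}).Reachable p u ∨ (G \ fromEdgeSet {s(u,v)}).Reachable p v) ∧
       ((G \ fromEdgeSet {s(u,v)}).Reachable q u ∨ (G \ fromEdgeSet {s(u,v)}).Reachable q v)) := by
  set H := G \ fromEdgeSet {s(u,v)} with hH
  obtain ⟨w⟩ := h
  induction w with
  | nil => exact Or.inl (Reachable.refl _)
  | @cons p p' q hadj rest ih =>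
    by_cases he : s(p, p') = s(u, v)
    · -- p,p' is the deleted edge
      rw [Sym2.eq_iff] at he
      rcases ih with hr | ⟨hp', hq⟩
      · rcases he with ⟨rfl, rfl⟩ | ⟨rfl, rfl⟩
        · exact Or.inr ⟨Or.inl (Reachable.refl _), Or.inr hr.symm⟩
        · exact Or.inr ⟨Or.inr (Reachable.refl _), Or.inl hr.symm⟩
      · rcases he with ⟨rfl, rfl⟩ | ⟨rfl, rfl⟩
        · exact Or.inr ⟨Or.inl (Reachable.refl _), hq⟩
        · exact Or.inr ⟨Or.inr (Reachable.refl _), hq⟩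
    · have hH' : H.Adj p p' := by
        rw [hH, sdiff_adj, fromEdgeSet_adj]
        exact ⟨hadj, fun hc => he hc.1⟩
      rcases ih with hr | ⟨hp', hq⟩
      · exact Or.inl (hH'.reachable.trans hr)
      · refine Or.inr ⟨?_, hq⟩
        rcases hp' with h1 | h1
        · exact Or.inl (hH'.reachable.trans h1)
        · exact Or.inr (hH'.reachable.trans h1)

lemma aux_total_bound {V : Type*} [Fintype V] :
    ∀ (k : ℕ) (G : SimpleGraph V), G.edgeSet.ncard ≤ k →
      Fintype.card V ≤ G.edgeSet.ncard + Nat.card G.ConnectedComponent := by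
  intro k
  induction k with
  | zero =>
    intro G he
    have h0 : G.edgeSet.ncard = 0 := Nat.le_zero.mp he
    have : G.edgeSet = ∅ := (Set.ncard_eq_zero G.edgeSet.toFinite).mp h0
    have hbot : G = ⊥ := edgeSet_eq_empty.mp this
    subst hbot
    have hinj : Function.Injective ((⊥ : SimpleGraph V).connectedComponentMk) := by
      intro a b hab
      exact reachable_bot.mp (ConnectedComponent.exact hab)
    have := Nat.card_le_card_of_injective _ hinj
    rw [Nat.card_eq_fintype_card] at this
    omega
  | succ k ih =>
    intro G he
    by_cases h0 : G.edgeSet = ∅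
    · have h0' : G.edgeSet.ncard = 0 := by simp [h0]
      have := ih G (by omega)
      omega
    · obtain ⟨e, heG⟩ := Set.nonempty_iff_ne_empty.mpr h0
      induction e using Sym2.ind with
      | _ u v =>
      classical
      set H := G \ fromEdgeSet {s(u,v)} with hHdef
      have hle : H ≤ G := sdiff_le
      have hHe : H.edgeSet = G.edgeSet \ {s(u,v)} := by
        rw [hHdef, edgeSet_sdiff, edgeSet_fromEdgeSet]
        ext e'
        simp only [Set.mem_diff, Set.mem_singleton_iff, Set.mem_setOf_eq]
        constructor
        · rintro ⟨h1, h2⟩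
          refine ⟨h1, fun hc => h2 ⟨hc, ?_⟩⟩
          subst hc
          exact (G.mem_edgeSet.mp h1).ne
        · rintro ⟨h1, h2⟩
          exact ⟨h1, fun hc => h2 hc.1⟩
      have hcard : H.edgeSet.ncard + 1 = G.edgeSet.ncard := by
        rw [hHe]
        exact Set.ncard_diff_singleton_add_one heG G.edgeSet.toFinite
      -- injection comps(H) → Option comps(G)
      have hmon : ∀ a b, H.Adj a b → G.Reachable a b := fun a b hab => (hle hab).reachable
      set π := compMap hmon with hπ
      set f : H.ConnectedComponent → Option G.ConnectedComponent :=
        fun K => if K = H.connectedComponentMk u then none else some (π K) with hf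
      have hinj : Function.Injective f := by
        intro K L hKL
        by_cases hK : K = H.connectedComponentMk u <;> by_cases hL : L = H.connectedComponentMk u
        · rw [hK, hL]
        · simp [hf, hK, hL] at hKL
        · simp [hf, hK, hL] at hKL
        · simp only [hf, if_neg hK, if_neg hL, Option.some.injEq] at hKL
          revert hK hL hKL
          refine ConnectedComponent.ind₂ (fun p q hK hL hKL => ?_) K L
          simp only [hπ, compMap_mk, ConnectedComponent.eq] at hKL
          rcases aux_delete_reach (u := u) (v := v) hKL with hr | ⟨hp, hq⟩
          · exact ConnectedComponent.sound hr
          · rcases hp with hp | hp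
            · exact absurd (ConnectedComponent.sound hp) hK
            · rcases hq with hq | hq
              · exact absurd (ConnectedComponent.sound hq) hL
              · exact (ConnectedComponent.sound hp).trans (ConnectedComponent.sound hq).symm
      have hc2 : Nat.card H.ConnectedComponent ≤ Nat.card G.ConnectedComponent + 1 := by
        haveI : Finite G.ConnectedComponent := Finite.of_surjective _ (Quot.mk_surjective)
        have := Nat.card_le_card_of_injective f hinj
        rwa [Finite.card_option] at this
      have := ih H (by omega)
      omega

lemma aux_bridges_bound {V : Type*} [Fintype V] :
    ∀ (k : ℕ) (G : SimpleGraph V), G.edgeSet.ncard ≤ k →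
      (∀ e ∈ G.edgeSet, G.IsBridge e) →
      G.edgeSet.ncard + Nat.card G.ConnectedComponent ≤ Fintype.card V := by
  intro k
  induction k with
  | zero =>
    intro G he _
    have h0 : G.edgeSet.ncard = 0 := Nat.le_zero.mp he
    have := aux_comp_card_le G
    omega
  | succ k ih =>
    intro G he hb
    by_cases h0 : G.edgeSet = ∅
    · have h0' : G.edgeSet.ncard = 0 := by simp [h0]
      have := aux_comp_card_le G
      omega
    · obtain ⟨e, heG⟩ := Set.nonempty_iff_ne_empty.mpr h0
      induction e using Sym2.ind with
      | _ u v =>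
      classical
      set H := G \ fromEdgeSet {s(u,v)} with hHdef
      have hle : H ≤ G := sdiff_le
      have hHe : H.edgeSet = G.edgeSet \ {s(u,v)} := by
        rw [hHdef, edgeSet_sdiff, edgeSet_fromEdgeSet]
        ext e'
        simp only [Set.mem_diff, Set.mem_singleton_iff, Set.mem_setOf_eq]
        constructor
        · rintro ⟨h1, h2⟩
          refine ⟨h1, fun hc => h2 ⟨hc, ?_⟩⟩
          subst hc
          exact (G.mem_edgeSet.mp h1).ne
        · rintro ⟨h1, h2⟩
          exact ⟨h1, fun hc => h2 hc.1⟩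
      have hcard : H.edgeSet.ncard + 1 = G.edgeSet.ncard := by
        rw [hHe]
        exact Set.ncard_diff_singleton_add_one heG G.edgeSet.toFinite
      -- H still has all edges bridges
      have hbH : ∀ e ∈ H.edgeSet, H.IsBridge e := by
        intro e heH
        induction e using Sym2.ind with
        | _ p q =>
        have hpq : H.Adj p q := H.mem_edgeSet.mp heH
        have hGpq : G.Adj p q := hle hpq
        have hbG := (isBridge_iff.mp (hb _ (G.mem_edgeSet.mpr hGpq)))
        rw [isBridge_iff]
        refine fun hr => hbG ?_
        refine hr.mono ?_
        exact sdiff_le_sdiff hle le_rfl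
      -- components increase
      have hmon : ∀ a b, H.Adj a b → G.Reachable a b := fun a b hab => (hle hab).reachable
      have hbr := (isBridge_iff.mp (hb _ heG))
      have hne : H.connectedComponentMk u ≠ H.connectedComponentMk v := by
        intro hc
        exact hbr (ConnectedComponent.exact hc)
      have heq : compMap hmon (H.connectedComponentMk u) = compMap hmon (H.connectedComponentMk v) := by
        simp only [compMap_mk]
        exact ConnectedComponent.sound (G.mem_edgeSet.mp heG).reachable
      haveI : Finite H.ConnectedComponent := Finite.of_surjective _ (Quot.mk_surjective)
      have hstep := aux_card_succ_le (compMap hmon) (compMap_surjective hmon) hne heq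
      have := ih H (by omega) hbH
      omega

/-- The 2-switch: remove edges `ab`, `wx`; add edges `aw`, `bx`. -/
def Gswap {V : Type*} (G : SimpleGraph V) (a b w x : V) : SimpleGraph V where
  Adj u v := (G.Adj u v ∧ s(u,v) ≠ s(a,b) ∧ s(u,v) ≠ s(w,x)) ∨
    ((s(u,v) = s(a,w) ∨ s(u,v) = s(b,x)) ∧ u ≠ v)
  symm := by
    constructor
    intro u v h
    have hsw : s(v,u) = s(u,v) := Sym2.eq_swap
    rw [hsw]
    rcases h with ⟨h1, h2⟩ | ⟨h3, h4⟩
    · exact Or.inl ⟨h1.symm, h2⟩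
    · exact Or.inr ⟨h3, h4.symm⟩
  loopless := by
    constructor
    intro v h
    rcases h with ⟨h1, _⟩ | ⟨_, h2⟩
    · exact G.irrefl h1
    · exact h2 rfl

lemma Gswap_adj {V : Type*} {G : SimpleGraph V} {a b w x u v : V} :
    (Gswap G a b w x).Adj u v ↔ (G.Adj u v ∧ s(u,v) ≠ s(a,b) ∧ s(u,v) ≠ s(w,x)) ∨
    ((s(u,v) = s(a,w) ∨ s(u,v) = s(b,x)) ∧ u ≠ v) := Iff.rfl

lemma Gswap_comm1 {V : Type*} (G : SimpleGraph V) (a b w x : V) :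
    Gswap G a b w x = Gswap G b a x w := by
  ext u v
  rw [Gswap_adj, Gswap_adj, show s(b,a) = s(a,b) from Sym2.eq_swap,
    show s(x,w) = s(w,x) from Sym2.eq_swap]
  tauto

lemma Gswap_comm2 {V : Type*} (G : SimpleGraph V) (a b w x : V) :
    Gswap G a b w x = Gswap G w x a b := by
  ext u v
  rw [Gswap_adj, Gswap_adj, show s(w,a) = s(a,w) from Sym2.eq_swap,
    show s(x,b) = s(b,x) from Sym2.eq_swap]
  tauto

lemma Gswap_nbhd_a {V : Type*} {G : SimpleGraph V} {a b w x : V}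
    (hab : G.Adj a b) (haw : a ≠ w) (hax : a ≠ x) :
    (Gswap G a b w x).neighborSet a = insert w (G.neighborSet a \ {b}) := by
  have hne : a ≠ b := hab.ne
  ext u
  rw [SimpleGraph.mem_neighborSet, Set.mem_insert_iff, Set.mem_diff, Set.mem_singleton_iff]
  constructor
  · rintro (⟨h1, h2, h3⟩ | ⟨(h4 | h4), h5⟩)
    · exact Or.inr ⟨h1, fun hub => h2 (by rw [hub])⟩
    · rcases Sym2.eq_iff.mp h4 with ⟨-, rfl⟩ | ⟨rfl, rfl⟩
      · exact Or.inl rfl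
      · exact absurd rfl haw
    · rcases Sym2.eq_iff.mp h4 with ⟨rfl, -⟩ | ⟨rfl, -⟩
      · exact absurd rfl hne
      · exact absurd rfl hax
  · rintro (rfl | ⟨h1, h2⟩)
    · exact Or.inr ⟨Or.inl rfl, haw⟩
    · refine Or.inl ⟨h1, fun hc => ?_, fun hc => ?_⟩
      · rcases Sym2.eq_iff.mp hc with ⟨-, h⟩ | ⟨h, -⟩
        · exact h2 h
        · exact hne h
      · rcases Sym2.eq_iff.mp hc with ⟨h, -⟩ | ⟨h, -⟩
        · exact haw h
        · exact hax h

lemma Gswap_ncard_a {V : Type*} [Fintype V] {G : SimpleGraph V} {a b w x : V}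
    (hab : G.Adj a b) (hnaw : ¬G.Adj a w) (haw : a ≠ w) (hax : a ≠ x) :
    ((Gswap G a b w x).neighborSet a).ncard = (G.neighborSet a).ncard := by
  rw [Gswap_nbhd_a hab haw hax]
  have hw : w ∉ G.neighborSet a \ {b} := fun h => hnaw h.1
  have hbmem : b ∈ G.neighborSet a := hab
  rw [Set.ncard_insert_of_notMem hw (Set.toFinite _),
    Set.ncard_diff_singleton_add_one hbmem (Set.toFinite _)]

lemma Gswap_ncard {V : Type*} [Fintype V] {G : SimpleGraph V} {a b w x : V}
    (hab : G.Adj a b) (hwx : G.Adj w x) (hnaw : ¬G.Adj a w) (hnbx : ¬G.Adj b x)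
    (haw : a ≠ w) (hax : a ≠ x) (hbw : b ≠ w) (hbx : b ≠ x) :
    ∀ v, ((Gswap G a b w x).neighborSet v).ncard = (G.neighborSet v).ncard := by
  intro v
  by_cases hva : v = a
  · subst hva; exact Gswap_ncard_a hab hnaw haw hax
  by_cases hvb : v = b
  · subst hvb
    rw [Gswap_comm1]
    exact Gswap_ncard_a hab.symm (fun h => hnbx h) hbx hbw
  by_cases hvw : v = w
  · subst hvw
    rw [Gswap_comm2]
    exact Gswap_ncard_a hwx (fun h => hnaw h.symm) haw.symm hbw.symm
  by_cases hvx : v = x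
  · subst hvx
    rw [Gswap_comm2, Gswap_comm1]
    exact Gswap_ncard_a hwx.symm (fun h => hnbx h.symm) hbx.symm hax.symm
  · congr 1
    ext u
    rw [SimpleGraph.mem_neighborSet, SimpleGraph.mem_neighborSet]
    constructor
    · rintro (⟨h1, -, -⟩ | ⟨(h4 | h4), -⟩)
      · exact h1
      · rcases Sym2.eq_iff.mp h4 with ⟨rfl, -⟩ | ⟨rfl, -⟩
        · exact absurd rfl hva
        · exact absurd rfl hvw
      · rcases Sym2.eq_iff.mp h4 with ⟨rfl, -⟩ | ⟨rfl, -⟩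
        · exact absurd rfl hvb
        · exact absurd rfl hvx
    · intro h1
      refine Or.inl ⟨h1, fun hc => ?_, fun hc => ?_⟩
      · rcases Sym2.eq_iff.mp hc with ⟨h, -⟩ | ⟨h, -⟩
        · exact hva h
        · exact hvb h
      · rcases Sym2.eq_iff.mp hc with ⟨h, -⟩ | ⟨h, -⟩
        · exact hvw h
        · exact hvx h

lemma Gswap_reach {V : Type*} {G : SimpleGraph V} {a b w x : V}
    (hab : G.Adj a b) (hwx : G.Adj w x)
    (hH : (G \ fromEdgeSet {s(a,b)}).Reachable a b)
    (hnr : ∀ y, G.Reachable a y → y ≠ w ∧ y ≠ x) :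
    ∀ u v, G.Adj u v → (Gswap G a b w x).Reachable u v := by
  classical
  have haw : a ≠ w := (hnr a (Reachable.refl a)).1
  have hax : a ≠ x := (hnr a (Reachable.refl a)).2
  have hbw : b ≠ w := (hnr b hab.reachable).1
  have hbx : b ≠ x := (hnr b hab.reachable).2
  have hsub : G \ fromEdgeSet {s(a,b), s(w,x)} ≤ Gswap G a b w x := by
    intro u v h
    rw [SimpleGraph.sdiff_adj, SimpleGraph.fromEdgeSet_adj] at h
    refine Or.inl ⟨h.1, fun hc => h.2 ⟨Or.inl hc, h.1.ne⟩, fun hc => h.2 ⟨Or.inr hc, h.1.ne⟩⟩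
  have hreachab : (Gswap G a b w x).Reachable a b := by
    obtain ⟨p⟩ := hH
    have hp : ∀ e ∈ p.edges, e ∈ (G \ fromEdgeSet {s(a,b), s(w,x)}).edgeSet := by
      intro e he
      have he1 : e ∈ (G \ fromEdgeSet {s(a,b)}).edgeSet := p.edges_subset_edgeSet he
      have hewx : e ≠ s(w,x) := by
        rintro rfl
        have hw : w ∈ p.support := p.fst_mem_support_of_mem_edges he
        have hr : (G \ fromEdgeSet {s(a,b)}).Reachable a w := ⟨p.takeUntil w hw⟩
        have : G.Reachable a w := hr.mono sdiff_le
        exact (hnr w this).1 rfl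
      rw [edgeSet_sdiff, edgeSet_fromEdgeSet] at he1 ⊢
      obtain ⟨he2, he3⟩ := he1
      refine ⟨he2, fun hc => ?_⟩
      obtain ⟨hc1, hc2⟩ := hc
      rcases hc1 with hc1 | hc1
      · exact he3 ⟨hc1, hc2⟩
      · rw [Set.mem_singleton_iff] at hc1
        exact hewx hc1
    exact (Reachable.mono hsub) ⟨p.transfer _ hp⟩
  intro u v huv
  by_cases h1 : s(u,v) = s(a,b)
  · rcases Sym2.eq_iff.mp h1 with ⟨rfl, rfl⟩ | ⟨rfl, rfl⟩
    · exact hreachab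
    · exact hreachab.symm
  by_cases h2 : s(u,v) = s(w,x)
  · have hadjaw : (Gswap G a b w x).Adj a w := Or.inr ⟨Or.inl rfl, haw⟩
    have hadjbx : (Gswap G a b w x).Adj b x := Or.inr ⟨Or.inr rfl, hbx⟩
    have hwxr : (Gswap G a b w x).Reachable w x :=
      (hadjaw.symm.reachable.trans hreachab).trans hadjbx.reachable
    rcases Sym2.eq_iff.mp h2 with ⟨rfl, rfl⟩ | ⟨rfl, rfl⟩
    · exact hwxr
    · exact hwxr.symm
  · exact SimpleGraph.Adj.reachable (Or.inl ⟨huv, h1, h2⟩)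

lemma Gswap_comp_decrease {V : Type*} [Fintype V] {G : SimpleGraph V} {a b w x : V}
    (hab : G.Adj a b) (hwx : G.Adj w x)
    (hH : (G \ fromEdgeSet {s(a,b)}).Reachable a b)
    (hnr : ∀ y, G.Reachable a y → y ≠ w ∧ y ≠ x) :
    Nat.card (Gswap G a b w x).ConnectedComponent + 1 ≤ Nat.card G.ConnectedComponent := by
  have hmon := Gswap_reach hab hwx hH hnr
  haveI : Finite G.ConnectedComponent := Finite.of_surjective _ (Quot.mk_surjective)
  have hne : G.connectedComponentMk a ≠ G.connectedComponentMk w := by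
    intro hc
    exact (hnr w (ConnectedComponent.exact hc)).1 rfl
  have heq : compMap hmon (G.connectedComponentMk a) = compMap hmon (G.connectedComponentMk w) := by
    simp only [compMap_mk]
    have hadjaw : (Gswap G a b w x).Adj a w :=
      Or.inr ⟨Or.inl rfl, (hnr a (Reachable.refl a)).1⟩
    exact ConnectedComponent.sound hadjaw.reachable
  exact aux_card_succ_le (compMap hmon) (compMap_surjective hmon) hne heq



/-- A function `d : Fin n → ℕ` is graphic if it is the degree sequence of a
simple undirected graph on `n` vertices. -/
def Graphic (n : ℕ) (d : Fin n → ℕ) : Prop :=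
  ∃ G : SimpleGraph (Fin n), ∀ v, (G.neighborSet v).ncard = d v

/-- Zero-free degree sequences of length `n` (non-increasing, positive, graphic). -/
def D (n : ℕ) : Set (Fin n → ℕ) :=
  {d | Antitone d ∧ (∀ i, 0 < d i) ∧ Graphic n d}

/-- Degree sequences of length `n` allowing zero terms. -/
def D0 (n : ℕ) : Set (Fin n → ℕ) :=
  {d | Antitone d ∧ Graphic n d}
/-- A degree sequence is potentially connected if it has a connected realization. -/
def PotentiallyConnected (n : ℕ) (d : Fin n → ℕ) : Prop :=
  ∃ G : SimpleGraph (Fin n), (∀ v, (G.neighborSet v).ncard = d v) ∧ G.Connected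


theorem potentially_connected_iff (n : ℕ) (hn : 1 ≤ n) (d : Fin n → ℕ) (hd : d ∈ D n) :
    PotentiallyConnected n d ↔ 2 * (n - 1) ≤ ∑ i, d i := by
  classical
  obtain ⟨hmono, hpos, hgraphic⟩ := hd
  haveI : Nonempty (Fin n) := ⟨⟨0, hn⟩⟩
  constructor
  · rintro ⟨G, hG, hconn⟩
    have hsum : ∑ v, (G.neighborSet v).ncard = 2 * G.edgeSet.ncard := aux_sum_ncard G
    have hd2 : ∑ i, d i = 2 * G.edgeSet.ncard := by
      rw [← hsum]
      exact Finset.sum_congr rfl (fun i _ => (hG i).symm)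
    have hcomp : Nat.card G.ConnectedComponent = 1 := by
      rw [Nat.card_eq_one_iff_unique]
      exact ⟨hconn.preconnected.subsingleton_connectedComponent,
        ⟨G.connectedComponentMk ⟨0, hn⟩⟩⟩
    have htot := aux_total_bound G.edgeSet.ncard G le_rfl
    rw [Fintype.card_fin] at htot
    omega
  · intro hsum
    have key : ∀ (k : ℕ) (G : SimpleGraph (Fin n)), (∀ v, (G.neighborSet v).ncard = d v) →
        Nat.card G.ConnectedComponent ≤ k → PotentiallyConnected n d := by
      intro k
      induction k with
      | zero =>
        intro G hG hc
        haveI : Finite G.ConnectedComponent := Finite.of_surjective _ Quot.mk_surjective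
        haveI : Nonempty G.ConnectedComponent := ⟨G.connectedComponentMk ⟨0, hn⟩⟩
        have : 0 < Nat.card G.ConnectedComponent := Nat.card_pos
        omega
      | succ k ih =>
        intro G hG hc
        by_cases hcon : G.Connected
        · exact ⟨G, hG, hcon⟩
        have hnp : ¬G.Preconnected := fun hp => hcon ((SimpleGraph.connected_iff G).mpr ⟨hp, inferInstance⟩)
        obtain ⟨u₀, v₀, hne0⟩ : ∃ u v, ¬ G.Reachable u v := by
          by_contra hc'
          push_neg at hc'
          exact hnp (fun u v => hc' u v)
        have hsum2 : ∑ i, d i = 2 * G.edgeSet.ncard := by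
          rw [← aux_sum_ncard G]
          exact Finset.sum_congr rfl (fun i _ => (hG i).symm)
        have hedge : n - 1 ≤ G.edgeSet.ncard := by omega
        haveI : Finite G.ConnectedComponent := Finite.of_surjective _ Quot.mk_surjective
        have hcomp2 : 2 ≤ Nat.card G.ConnectedComponent := by
          haveI : Nontrivial G.ConnectedComponent :=
            ⟨G.connectedComponentMk u₀, G.connectedComponentMk v₀,
              fun hc => hne0 (ConnectedComponent.exact hc)⟩
          exact Finite.one_lt_card
        have hnb : ¬ ∀ e ∈ G.edgeSet, G.IsBridge e := by
          intro hball
          have := aux_bridges_bound G.edgeSet.ncard G le_rfl hball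
          rw [Fintype.card_fin] at this
          omega
        push_neg at hnb
        obtain ⟨e, heG, hebr⟩ := hnb
        obtain ⟨a, b, hab, hreach⟩ :
            ∃ a b, G.Adj a b ∧ (G \ fromEdgeSet {s(a,b)}).Reachable a b := by
          induction e using Sym2.ind with
          | _ p q =>
            have hpq : G.Adj p q := G.mem_edgeSet.mp heG
            refine ⟨p, q, hpq, ?_⟩
            rw [isBridge_iff] at hebr
            by_contra h
            exact hebr h
        obtain ⟨w, hw⟩ : ∃ w, ¬ G.Reachable a w := by
          by_cases h : G.Reachable a u₀
          · exact ⟨v₀, fun hc => hne0 (h.symm.trans hc)⟩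
          · exact ⟨u₀, h⟩
        obtain ⟨x, hwx⟩ : ∃ x, G.Adj w x := by
          have h3 : (G.neighborSet w).Nonempty := by
            rw [← Set.ncard_pos (Set.toFinite _), hG w]
            exact hpos w
          exact h3
        have hnr : ∀ y, G.Reachable a y → y ≠ w ∧ y ≠ x := by
          intro y hy
          constructor
          · rintro rfl; exact hw hy
          · rintro rfl; exact hw (hy.trans hwx.reachable.symm)
        have hnaw : ¬G.Adj a w := fun h => hw h.reachable
        have hnbx : ¬G.Adj b x := fun h => (hnr x (hab.reachable.trans h.reachable)).2 rfl
        have hG' : ∀ v, ((Gswap G a b w x).neighborSet v).ncard = d v := by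
          intro v
          rw [Gswap_ncard hab hwx hnaw hnbx (hnr a (Reachable.refl a)).1
            (hnr a (Reachable.refl a)).2 (hnr b hab.reachable).1 (hnr b hab.reachable).2 v]
          exact hG v
        have hdec := Gswap_comp_decrease hab hwx hreach hnr
        exact ih (Gswap G a b w x) hG' (by omega)
    obtain ⟨G0, hG0⟩ := hgraphic
    exact key (Nat.card G0.ConnectedComponent) G0 hG0 le_rfl
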